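/- Let γ > 0, let d, C be positive natural numbers, and for i = 1, …, k let X_i be a real N_i × d matrix and Y_i a real N_i × C matrix. Define R_j = (∑_{i=1}^{j} X_iᵀ X_i + γ I_d)⁻¹, Q_j = ∑_{i=1}^{j} X_iᵀ Y_i, and W_j = R_j Q_j (the ridge-regression solution on the joint data of phases 1 through j). Then for every k ≥ 1, W_k = (I_d − R_k X_kᵀ X_k) W_{k−1} + R_k X_kᵀ Y_k, where W_0 is the d × C zero matrix. -/

import Mathlib

open Matrix Finset

lemma posSemidef_sum_aux {d : ℕ} (s : Finset ℕ)
    (f : ℕ → Matrix (Fin d) (Fin d) ℝ)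
    (h : ∀ i ∈ s, (f i).PosSemidef) : (∑ i ∈ s, f i).PosSemidef := by
  induction s using Finset.induction_on with
  | empty => simpa using Matrix.PosSemidef.zero
  | insert _ _ hx ih =>
    rw [Finset.sum_insert hx]
    exact (h _ (Finset.mem_insert_self _ _)).add
      (ih fun i hi => h i (Finset.mem_insert_of_mem hi))

/-- Weight-invariant property (Theorem 2 of the paper): the joint
ridge-regression weight `W j = R j * Q j`, with
`R j = (∑_{i=1}^{j} Xᵢᵀ Xᵢ + γ I)⁻¹` and `Q j = ∑_{i=1}^{j} Xᵢᵀ Yᵢ`,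
satisfies the recursion `W k = (I - R k Xₖᵀ Xₖ) W (k-1) + R k Xₖᵀ Yₖ`
for every `k ≥ 1`, with `W 0 = 0`. -/
theorem stmt_1 (γ : ℝ) (hγ : 0 < γ) (d C : ℕ) (hd : 0 < d) (hC : 0 < C)
    (N : ℕ → ℕ)
    (X : (i : ℕ) → Matrix (Fin (N i)) (Fin d) ℝ)
    (Y : (i : ℕ) → Matrix (Fin (N i)) (Fin C) ℝ)
    (R : ℕ → Matrix (Fin d) (Fin d) ℝ)
    (Q : ℕ → Matrix (Fin d) (Fin C) ℝ)
    (W : ℕ → Matrix (Fin d) (Fin C) ℝ)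
    (hR : ∀ j : ℕ,
      R j = (∑ i ∈ Finset.Icc 1 j, (X i)ᵀ * X i
        + γ • (1 : Matrix (Fin d) (Fin d) ℝ))⁻¹)
    (hQ : ∀ j : ℕ, Q j = ∑ i ∈ Finset.Icc 1 j, (X i)ᵀ * Y i)
    (hW : ∀ j : ℕ, W j = R j * Q j)
    (k : ℕ) (hk : 1 ≤ k) :
    W 0 = 0 ∧
    W k = ((1 : Matrix (Fin d) (Fin d) ℝ) - R k * (X k)ᵀ * X k) * W (k - 1)
        + R k * (X k)ᵀ * Y k := by
  -- notation for the regularized autocorrelation matrices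
  set A : ℕ → Matrix (Fin d) (Fin d) ℝ :=
    fun j => ∑ i ∈ Finset.Icc 1 j, (X i)ᵀ * X i
      + γ • (1 : Matrix (Fin d) (Fin d) ℝ) with hA
  have hposdef : ∀ j, (A j).PosDef := by
    intro j
    apply Matrix.PosDef.posSemidef_add
    · apply posSemidef_sum_aux
      intro i _
      have := Matrix.posSemidef_conjTranspose_mul_self (X i)
      simpa using this
    · have : γ • (1 : Matrix (Fin d) (Fin d) ℝ)
          = Matrix.diagonal (fun _ => γ) := by
        rw [Matrix.smul_one_eq_diagonal]
      rw [this]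
      exact Matrix.posDef_diagonal_iff.2 (fun _ => hγ)
  have hunit : ∀ j, IsUnit (A j).det := fun j => (hposdef j).det_pos.ne'.isUnit
  have hRA : ∀ j, R j * A j = 1 := by
    intro j
    rw [hR j]
    exact Matrix.nonsing_inv_mul _ (hunit j)
  have hAR : ∀ j, A j * R j = 1 := by
    intro j
    rw [hR j]
    exact Matrix.mul_nonsing_inv _ (hunit j)
  have hW0 : W 0 = 0 := by
    rw [hW 0, hQ 0]
    simp
  refine ⟨hW0, ?_⟩
  obtain ⟨m, rfl⟩ : ∃ m, k = m + 1 := ⟨k - 1, (Nat.succ_pred_eq_of_pos hk).symm⟩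
  have hsucc : (m + 1) - 1 = m := rfl
  rw [hsucc]
  have hAstep : A (m + 1) = A m + (X (m + 1))ᵀ * X (m + 1) := by
    simp only [hA]
    rw [Finset.sum_Icc_succ_top (by omega : 1 ≤ m + 1)]
    abel
  have hQstep : Q (m + 1) = Q m + (X (m + 1))ᵀ * Y (m + 1) := by
    rw [hQ, hQ, Finset.sum_Icc_succ_top (by omega : 1 ≤ m + 1)]
  have key : (1 : Matrix (Fin d) (Fin d) ℝ)
      - R (m + 1) * (X (m + 1))ᵀ * X (m + 1) = R (m + 1) * A m := by
    have : R (m + 1) * A (m + 1) = 1 := hRA (m + 1)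
    rw [hAstep, Matrix.mul_add] at this
    rw [← this, Matrix.mul_assoc]
    abel
  rw [key, hW (m+1), hW m, hQstep, Matrix.mul_add]
  congr 1
  rw [Matrix.mul_assoc, ← Matrix.mul_assoc (A m), hAR m, Matrix.one_mul]
  rw [Matrix.mul_assoc]
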